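/- arXiv:1108.1303 — 2 statements merged into one kernel-verified Lean document; each statement's English description precedes it below -/
import Mathlib

section
/- Let G be a finite group, let N be a normal subgroup of G with N ∩ [G,G] = 1 (the intersection of N with the commutator subgroup of G is trivial), and let n be a natural number. Then d_n(G) = d_n(G/N). -/
/-- The multiple commutativity degree `d_n(G)`: the number of `(n+1)`-tuples of
pairwise commuting elements of `G`, divided by `|G|^(n+1)`. -/
noncomputable def multCommDegree (G : Type*) [Group G] (n : ℕ) : ℚ :=
  (Nat.card {f : Fin (n + 1) → G // ∀ i j, Commute (f i) (f j)} : ℚ) /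
    (Nat.card G : ℚ) ^ (n + 1)

section Aux

open scoped commutatorElement

variable {G : Type*} [Group G] (N : Subgroup G) [N.Normal]

lemma commute_mk_iff (hN : N ⊓ commutator G = ⊥) (x y : G) :
    Commute (QuotientGroup.mk x : G ⧸ N) (QuotientGroup.mk y) ↔ Commute x y := by
  constructor
  · intro h
    rw [← commutatorElement_eq_one_iff_commute]
    have h1 : (⁅x, y⁆ : G) ∈ N := by
      rw [← QuotientGroup.eq_one_iff, ← QuotientGroup.mk'_apply, map_commutatorElement]
      exact commutatorElement_eq_one_iff_commute.2 h
    have h2 : (⁅x, y⁆ : G) ∈ commutator G :=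
      Subgroup.commutator_mem_commutator (Subgroup.mem_top x) (Subgroup.mem_top y)
    have : (⁅x, y⁆ : G) ∈ N ⊓ commutator G := ⟨h1, h2⟩
    rw [hN] at this
    simpa using this
  · intro h
    exact h.map (QuotientGroup.mk' N)

noncomputable def commTupleEquiv (hN : N ⊓ commutator G = ⊥) (n : ℕ) :
    {f : Fin (n + 1) → G // ∀ i j, Commute (f i) (f j)} ≃
      (Fin (n + 1) → N) ×
        {g : Fin (n + 1) → G ⧸ N // ∀ i j, Commute (g i) (g j)} where
  toFun f :=
    ⟨fun i => ⟨f.1 i * ((QuotientGroup.mk (f.1 i) : G ⧸ N)).out⁻¹, by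
        rw [← QuotientGroup.eq_one_iff]
        simp [QuotientGroup.mk_mul, QuotientGroup.mk_inv]⟩,
      ⟨fun i => QuotientGroup.mk (f.1 i), fun i j =>
        (f.2 i j).map (QuotientGroup.mk' N)⟩⟩
  invFun p :=
    ⟨fun i => (p.1 i : G) * (p.2.1 i).out, by
      intro i j
      have hmk : ∀ i, (QuotientGroup.mk ((p.1 i : G) * (p.2.1 i).out) : G ⧸ N) = p.2.1 i := by
        intro i
        have h1 : (QuotientGroup.mk (p.1 i : G) : G ⧸ N) = 1 :=
          (QuotientGroup.eq_one_iff _).2 (p.1 i).2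
        rw [QuotientGroup.mk_mul, h1, one_mul, QuotientGroup.out_eq']
      rw [← commute_mk_iff N hN]
      rw [hmk i, hmk j]
      exact p.2.2 i j⟩
  left_inv f := by
    ext i
    simp
  right_inv p := by
    have hmk : ∀ i, (QuotientGroup.mk ((p.1 i : G) * (p.2.1 i).out) : G ⧸ N) = p.2.1 i := by
      intro i
      have h1 : (QuotientGroup.mk (p.1 i : G) : G ⧸ N) = 1 :=
        (QuotientGroup.eq_one_iff _).2 (p.1 i).2
      rw [QuotientGroup.mk_mul, h1, one_mul, QuotientGroup.out_eq']
    ext i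
    · simp [hmk i]
    · simp [hmk i]

end Aux

theorem multCommDegree_eq_quotient_of_inf_commutator_eq_bot (G : Type*) [Group G] [Finite G]
    (N : Subgroup G) [N.Normal] (hN : N ⊓ commutator G = ⊥) (n : ℕ) :
    multCommDegree G n = multCommDegree (G ⧸ N) n := by
  have hcard : Nat.card {f : Fin (n + 1) → G // ∀ i j, Commute (f i) (f j)} =
      Nat.card N ^ (n + 1) *
        Nat.card {g : Fin (n + 1) → G ⧸ N // ∀ i j, Commute (g i) (g j)} := by
    rw [Nat.card_congr (commTupleEquiv N hN n), Nat.card_prod, Nat.card_fun]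
    simp [Nat.card_eq_fintype_card]
  have hG : Nat.card G = Nat.card (G ⧸ N) * Nat.card N :=
    Subgroup.card_eq_card_quotient_mul_card_subgroup N
  have hNpos : 0 < Nat.card N := Nat.card_pos
  have hQpos : 0 < Nat.card (G ⧸ N) := Nat.card_pos
  unfold multCommDegree
  rw [hcard, hG]
  push_cast
  rw [mul_pow]
  have h1 : ((Nat.card N : ℚ)) ^ (n + 1) ≠ 0 := by positivity
  field_simp
end

section
/- Let G be a finite non-abelian group, let p be the smallest prime number dividing the order of G, and let n ≥ 1 be a natural number. Then d_n(G) = (p^{n+1} + p^n − 1)/p^{2n+1} if and only if G/Z(G) is an elementary abelian p-group of rank 2, i.e. G/Z(G) ≅ ℤ_p × ℤ_p. -/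
section Aux

open Subgroup Finset

lemma aux_addEquiv {p : ℕ} [Fact p.Prime] (A : Type*) [AddCommGroup A] [Module (ZMod p) A]
    [Fintype A] (hA : Fintype.card A = p ^ 2) : Nonempty (A ≃+ (ZMod p × ZMod p)) := by
  haveI : Module.Finite (ZMod p) A := ⟨⟨Finset.univ, by simp⟩⟩
  have hcard : Fintype.card A = Fintype.card (ZMod p) ^ Module.finrank (ZMod p) A :=
    Module.card_eq_pow_finrank
  have hrk2 : p ^ Module.finrank (ZMod p) A = p ^ 2 := by
    rw [ZMod.card] at hcard; rw [← hcard, hA]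
  have hrank : Module.finrank (ZMod p) A = 2 :=
    Nat.pow_right_injective (Fact.out : p.Prime).two_le hrk2
  let b := Module.finBasisOfFinrankEq (ZMod p) A hrank
  exact ⟨b.equivFun.toAddEquiv.trans
    { piFinTwoEquiv (fun _ => ZMod p) with map_add' := fun _ _ => rfl }⟩


lemma iso_of_card_sq {p : ℕ} (hp : p.Prime) (Q : Type*) [Group Q]
    (hQ : Nat.card Q = p ^ 2) (hnc : ¬ IsCyclic Q) :
    Nonempty (Q ≃* (Multiplicative (ZMod p) × Multiplicative (ZMod p))) := by
  haveI : Fact p.Prime := ⟨hp⟩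
  haveI : NeZero p := ⟨hp.ne_zero⟩
  have hfin : Finite Q := Nat.finite_of_card_ne_zero (by simp [hQ, hp.ne_zero])
  letI : CommGroup Q := IsPGroup.commGroupOfCardEqPrimeSq hQ
  have hord : ∀ x : Q, x ^ p = 1 := by
    intro x
    have h1 : orderOf x ∣ p ^ 2 := hQ ▸ orderOf_dvd_natCard x
    rcases (Nat.dvd_prime_pow hp).mp h1 with ⟨i, hi, hordx⟩
    interval_cases i
    · simp [orderOf_eq_one_iff.mp (by simpa using hordx)]
    · exact orderOf_dvd_iff_pow_eq_one.mp (by rw [hordx, pow_one])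
    · exact absurd (isCyclic_of_orderOf_eq_card x (by rw [hordx, hQ])) hnc
  letI : Module (ZMod p) (Additive Q) := AddCommGroup.zmodModule (n := p) (by
    intro x
    rw [← ofMul_toMul x, ← ofMul_pow, hord]
    rfl)
  haveI : Fintype (Additive Q) := Fintype.ofFinite _
  have hA : Fintype.card (Additive Q) = p ^ 2 := by
    rw [← Nat.card_eq_fintype_card, Nat.card_congr Additive.toMul, hQ]
  obtain ⟨e2⟩ := aux_addEquiv (Additive Q) hA
  exact ⟨{ toFun := fun q => (Multiplicative.ofAdd (e2 (Additive.ofMul q)).1,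
             Multiplicative.ofAdd (e2 (Additive.ofMul q)).2),
           invFun := fun y => (e2.symm (y.1.toAdd, y.2.toAdd)).toMul
           left_inv := fun q => by simp
           right_inv := fun y => by simp
           map_mul' := fun a b => by
             have h : e2 (Additive.ofMul (a * b)) = e2 (Additive.ofMul a) + e2 (Additive.ofMul b) :=
               map_add e2 (Additive.ofMul a) (Additive.ofMul b)
             simp only [h, Prod.fst_add, Prod.snd_add, ofAdd_add, Prod.mk_mul_mk] }⟩


private noncomputable def CT (H : Type*) [Group H] (m : ℕ) : ℕ :=
  Nat.card {f : Fin m → H // ∀ i j, Commute (f i) (f j)}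

private lemma CT_one (H : Type*) [Group H] : CT H 1 = Nat.card H := by
  refine Nat.card_congr ⟨fun f => f.1 0, fun x => ⟨fun _ => x, fun _ _ => Commute.refl x⟩,
    fun f => Subtype.ext (funext fun i => by
      have : i = 0 := Subsingleton.elim i 0
      rw [this]), fun x => rfl⟩

private lemma CT_le_pow (H : Type*) [Group H] [Finite H] (m : ℕ) :
    CT H m ≤ Nat.card H ^ m := by
  have h := Finite.card_subtype_le (fun f : Fin m → H => ∀ i j, Commute (f i) (f j))
  rwa [Nat.card_fun, Nat.card_eq_fintype_card (α := Fin m), Fintype.card_fin] at h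

private lemma CT_abelian (H : Type*) [Group H] (m : ℕ) (h : ∀ a b : H, a * b = b * a) :
    CT H m = Nat.card H ^ m := by
  refine (Nat.card_congr (Equiv.subtypeUnivEquiv (p := fun f : Fin m → H => ∀ i j, Commute (f i) (f j)) (fun f i j => h (f i) (f j)))).trans ?_
  rw [Nat.card_fun, Nat.card_eq_fintype_card (α := Fin m), Fintype.card_fin]

private lemma CT_mulEquiv {H K : Type*} [Group H] [Group K] (e : H ≃* K) (m : ℕ) :
    CT H m = CT K m := by
  refine Nat.card_congr ⟨fun f => ⟨fun i => e (f.1 i), fun i j => (f.2 i j).map e.toMonoidHom⟩,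
    fun f => ⟨fun i => e.symm (f.1 i), fun i j => (f.2 i j).map e.symm.toMonoidHom⟩,
    fun f => Subtype.ext (funext fun i => e.symm_apply_apply _),
    fun f => Subtype.ext (funext fun i => e.apply_symm_apply _)⟩

private lemma CT_rec (G : Type*) [Group G] [Fintype G] (m : ℕ) :
    CT G (m + 1) = ∑ x : G, CT (Subgroup.centralizer {x}) m := by
  classical
  have E : {f : Fin (m + 1) → G // ∀ i j, Commute (f i) (f j)} ≃
      Σ x : G, {f : Fin m → Subgroup.centralizer {x} // ∀ i j, Commute (f i) (f j)} := by
    refine ⟨fun f => ⟨f.1 0, fun i => ⟨f.1 i.succ, ?_⟩, fun i j => Subtype.ext (f.2 i.succ j.succ)⟩,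
      fun s => ⟨Fin.cases s.1 (fun i => (s.2.1 i : G)), ?_⟩, fun f => ?_, fun s => ?_⟩
    · rw [Subgroup.mem_centralizer_iff]
      rintro h rfl
      exact f.2 0 i.succ
    · intro i j
      induction i using Fin.cases with
      | zero => induction j using Fin.cases with
        | zero => simp [Commute.refl]
        | succ j =>
          simp only [Fin.cases_zero, Fin.cases_succ]
          exact Subgroup.mem_centralizer_iff.mp (s.2.1 j).2 s.1 rfl
      | succ i => induction j using Fin.cases with
        | zero =>
          simp only [Fin.cases_zero, Fin.cases_succ]
          exact (Subgroup.mem_centralizer_iff.mp (s.2.1 i).2 s.1 rfl).symm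
        | succ j =>
          simp only [Fin.cases_succ]
          exact congrArg Subtype.val (s.2.2 i j)
    · refine Subtype.ext (funext fun i => ?_)
      induction i using Fin.cases with
      | zero => rfl
      | succ i => simp
    · rfl
  rw [CT, Nat.card_congr E, Nat.card_eq_fintype_card, Fintype.card_sigma]
  congr 1
  funext x
  rw [← Nat.card_eq_fintype_card]
  rfl


section GroupFacts
variable {G : Type*} [Group G] [Finite G] {p : ℕ}

private lemma center_le_centralizer' (x : G) :
    Subgroup.center G ≤ Subgroup.centralizer {x} := fun a ha =>
  Subgroup.mem_centralizer_iff.mpr (fun h _ => Subgroup.mem_center_iff.mp ha h)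

private lemma self_mem_centralizer (x : G) : x ∈ Subgroup.centralizer {x} := by
  rw [Subgroup.mem_centralizer_iff]
  rintro h rfl
  rfl

private lemma centralizer_card_mul_le (hp : p.Prime)
    (hmin : ∀ q : ℕ, q.Prime → q ∣ Nat.card G → p ≤ q)
    {x : G} (hx : x ∉ Subgroup.center G) :
    Nat.card (Subgroup.centralizer ({x} : Set G)) * p ≤ Nat.card G := by
  set K := Subgroup.centralizer ({x} : Set G)
  have hne : K.index ≠ 1 := by
    rw [Ne, Subgroup.index_eq_one]
    intro htop
    exact hx (Subgroup.centralizer_eq_top_iff_subset.mp htop rfl)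
  have hdvd : K.index ∣ Nat.card G := Subgroup.index_dvd_card K
  have hq : K.index.minFac.Prime := Nat.minFac_prime hne
  have hple : p ≤ K.index := le_trans (hmin _ hq (dvd_trans (Nat.minFac_dvd _) hdvd))
    (Nat.minFac_le (Nat.pos_of_ne_zero Subgroup.index_ne_zero_of_finite))
  calc Nat.card K * p ≤ Nat.card K * K.index := Nat.mul_le_mul_left _ hple
  _ = Nat.card G := Subgroup.card_mul_index K

private lemma center_card_mul_le (hna : ¬ ∀ a b : G, a * b = b * a) (hp : p.Prime)
    (hmin : ∀ q : ℕ, q.Prime → q ∣ Nat.card G → p ≤ q) :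
    Nat.card (Subgroup.center G) * p ^ 2 ≤ Nat.card G := by
  set m := (Subgroup.center G).index with hm
  have hmdvd : m ∣ Nat.card G := Subgroup.index_dvd_card (Subgroup.center G)
  have hm0 : m ≠ 0 := Subgroup.index_ne_zero_of_finite
  have hne : m ≠ 1 := by
    rw [Ne, hm, Subgroup.index_eq_one]
    intro htop
    exact hna fun a b => by
      have : b ∈ Subgroup.center G := htop ▸ Subgroup.mem_top b
      exact Subgroup.mem_center_iff.mp this a
  have hnp : ¬ m.Prime := by
    intro hmp
    haveI : Fact m.Prime := ⟨hmp⟩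
    have : IsCyclic (G ⧸ Subgroup.center G) :=
      isCyclic_of_prime_card (p := m) (Subgroup.index_eq_card _).symm
    exact hna (commutative_of_cyclic_center_quotient (QuotientGroup.mk' (Subgroup.center G))
      (by rw [QuotientGroup.ker_mk']))
  -- m has at least two prime factors with multiplicity
  have hq := Nat.minFac_prime hne
  set q := m.minFac
  obtain ⟨t, ht⟩ := m.minFac_dvd
  have ht1 : t ≠ 1 := by
    rintro rfl
    rw [mul_one] at ht
    exact hnp (ht ▸ hq)
  have ht0 : t ≠ 0 := by rintro rfl; rw [mul_zero] at ht; exact hm0 ht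
  have hr := Nat.minFac_prime ht1
  set r := t.minFac
  have hqr : q * r ≤ m := by
    calc q * r ≤ q * t := Nat.mul_le_mul_left _ (Nat.minFac_le (Nat.pos_of_ne_zero ht0))
    _ = m := ht.symm
  have hpq : p ≤ q := hmin _ hq (dvd_trans m.minFac_dvd hmdvd)
  have hpr : p ≤ r := hmin _ hr (dvd_trans (dvd_trans t.minFac_dvd (Dvd.intro_left q ht.symm)) hmdvd)
  calc Nat.card (Subgroup.center G) * p ^ 2 ≤ Nat.card (Subgroup.center G) * m := by
        have : p ^ 2 ≤ m := le_trans (by rw [pow_two]; exact Nat.mul_le_mul hpq hpr) hqr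
        exact Nat.mul_le_mul_left _ this
  _ = Nat.card G := Subgroup.card_mul_index (Subgroup.center G)

private lemma centralizer_of_index_sq (hp : p.Prime)
    (hidx : (Subgroup.center G).index = p ^ 2) {x : G} (hx : x ∉ Subgroup.center G) :
    Nat.card (Subgroup.centralizer ({x} : Set G)) * p = Nat.card G ∧
      ∀ a b : Subgroup.centralizer ({x} : Set G), a * b = b * a := by
  set K := Subgroup.centralizer ({x} : Set G) with hK
  have hle : Subgroup.center G ≤ K := center_le_centralizer' x
  have hdvd2 : K.index ∣ p ^ 2 := hidx ▸ Subgroup.index_dvd_of_le hle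
  have hne1 : K.index ≠ 1 := by
    rw [Ne, Subgroup.index_eq_one]
    intro htop
    exact hx (Subgroup.centralizer_eq_top_iff_subset.mp htop rfl)
  have hnesq : K.index ≠ p ^ 2 := by
    intro hsq
    -- then card K = card center, so K = center, contradiction with x ∈ K
    have h1 : Nat.card K * K.index = Nat.card G := Subgroup.card_mul_index K
    have h2 : Nat.card (Subgroup.center G) * (Subgroup.center G).index = Nat.card G :=
      Subgroup.card_mul_index (Subgroup.center G)
    rw [hsq] at h1
    rw [hidx] at h2
    have hcardeq : Nat.card K = Nat.card (Subgroup.center G) :=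
      Nat.eq_of_mul_eq_mul_right (pow_pos hp.pos 2) (h1.trans h2.symm)
    have : Subgroup.center G = K := Subgroup.eq_of_le_of_card_ge hle (le_of_eq hcardeq)
    exact hx (this ▸ self_mem_centralizer x)
  have hKidx : K.index = p := by
    obtain ⟨i, hi, hival⟩ := (Nat.dvd_prime_pow hp).mp hdvd2
    interval_cases i
    · rw [pow_zero] at hival; exact absurd hival hne1
    · simpa using hival
    · exact absurd hival hnesq
  constructor
  · rw [← hKidx]; exact Subgroup.card_mul_index K
  · -- K is abelian
    have hrel : (Subgroup.center G).relIndex K * K.index = (Subgroup.center G).index :=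
      Subgroup.relIndex_mul_index hle
    rw [hKidx, hidx, pow_two] at hrel
    have hrelp : (Subgroup.center G).relIndex K = p :=
      Nat.eq_of_mul_eq_mul_right hp.pos hrel
    have hsub : (Subgroup.center G).subgroupOf K ≤ Subgroup.center K := by
      intro a ha
      rw [Subgroup.mem_subgroupOf] at ha
      rw [Subgroup.mem_center_iff]
      intro b
      exact Subtype.ext (Subgroup.mem_center_iff.mp ha (b : G))
    have hdvdp : (Subgroup.center K).index ∣ p := by
      rw [← hrelp]
      exact Subgroup.index_dvd_of_le hsub
    have hcyc : IsCyclic (K ⧸ Subgroup.center K) := by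
      rcases (Nat.dvd_prime hp).mp hdvdp with h1 | hpp
      · have : Nat.card (K ⧸ Subgroup.center K) = 1 := by
          rw [← Subgroup.index_eq_card, h1]
        haveI : Subsingleton (K ⧸ Subgroup.center K) := Nat.card_eq_one_iff_unique.mp this |>.1
        infer_instance
      · haveI : Fact p.Prime := ⟨hp⟩
        exact isCyclic_of_prime_card (p := p) (by rw [← Subgroup.index_eq_card, hpp])
    exact fun a b => commutative_of_cyclic_center_quotient (QuotientGroup.mk' (Subgroup.center K))
      (by rw [QuotientGroup.ker_mk']) a b

end GroupFacts

section Split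
variable (G : Type*) [Group G] [Fintype G] [DecidablePred (fun x : G => x ∈ Subgroup.center G)]

private lemma card_center_filter :
    (univ.filter (fun x : G => x ∈ Subgroup.center G)).card = Nat.card (Subgroup.center G) := by
  rw [Nat.card_eq_fintype_card]
  exact (Fintype.card_subtype _).symm

private lemma card_noncentral_filter :
    (univ.filter (fun x : G => x ∉ Subgroup.center G)).card
      = Nat.card G - Nat.card (Subgroup.center G) := by
  have h := Finset.card_filter_add_card_filter_not
    (s := (univ : Finset G)) (p := fun x : G => x ∈ Subgroup.center G)
  rw [card_center_filter, Finset.card_univ, ← Nat.card_eq_fintype_card] at h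
  omega

private lemma CT_split (m : ℕ) :
    (CT G (m + 1) : ℚ) = (Nat.card (Subgroup.center G)) * CT G m
      + ∑ x ∈ univ.filter (fun x : G => x ∉ Subgroup.center G),
          (CT (Subgroup.centralizer ({x} : Set G)) m : ℚ) := by
  have h := CT_rec G m
  rw [h, Nat.cast_sum,
    ← Finset.sum_filter_add_sum_filter_not univ (fun x : G => x ∈ Subgroup.center G)]
  congr 1
  rw [Finset.sum_congr rfl (fun x hx => ?_), Finset.sum_const, nsmul_eq_mul, card_center_filter]
  have htop : Subgroup.centralizer ({x} : Set G) = ⊤ :=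
    Subgroup.centralizer_eq_top_iff_subset.mpr
      (Set.singleton_subset_iff.mpr (Finset.mem_filter.mp hx).2)
  rw [htop, CT_mulEquiv Subgroup.topEquiv m]

end Split

section Analytic
variable (G : Type*) [Group G] [Fintype G]

set_option maxHeartbeats 1000000 in
private lemma CT_bound (p : ℕ) (hp : p.Prime)
    (hcb : ∀ x : G, x ∉ Subgroup.center G →
      Nat.card (Subgroup.centralizer ({x} : Set G)) * p ≤ Nat.card G)
    (hzp : Nat.card (Subgroup.center G) * p ^ 2 ≤ Nat.card G) (m : ℕ) :
    (CT G (m + 1) : ℚ) * (p : ℚ) ^ (2 * m + 1)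
      ≤ ((p : ℚ) ^ (m + 1) + (p : ℚ) ^ m - 1) * (Nat.card G : ℚ) ^ (m + 1) := by
  classical
  induction m with
  | zero => rw [CT_one]; push_cast; ring_nf; rfl
  | succ k IH =>
    set g : ℚ := (Nat.card G : ℚ) with hgdef
    set z : ℚ := (Nat.card (Subgroup.center G) : ℚ) with hzdef
    have hp2 : (2 : ℚ) ≤ (p : ℚ) := by exact_mod_cast hp.two_le
    have hg1 : (1 : ℚ) ≤ g := by
      rw [hgdef]; exact_mod_cast Nat.one_le_iff_ne_zero.mpr Nat.card_pos.ne'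
    have hz0 : (0 : ℚ) ≤ z := by positivity
    have hzpQ : z * (p : ℚ) ^ 2 ≤ g := by
      rw [hzdef, hgdef]; exact_mod_cast hzp
    set P : ℚ := (p : ℚ) ^ k with hPdef
    set X : ℚ := g ^ k with hXdef
    have hP1 : (1 : ℚ) ≤ P := one_le_pow₀ (by linarith)
    have hX0 : (0 : ℚ) ≤ X := by positivity
    -- split
    have hsplit := CT_split G (k + 1)
    -- bound on the noncentral sum
    set S : ℚ := ∑ x ∈ univ.filter (fun x : G => x ∉ Subgroup.center G),
        (CT (Subgroup.centralizer ({x} : Set G)) (k + 1) : ℚ) with hSdef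
    have hS0 : (0 : ℚ) ≤ S := Finset.sum_nonneg fun x _ => by positivity
    have hSb : S * (p : ℚ) ^ (k + 1) ≤ (g - z) * g ^ (k + 1) := by
      rw [hSdef, Finset.sum_mul]
      have hterm : ∀ x ∈ univ.filter (fun x : G => x ∉ Subgroup.center G),
          (CT (Subgroup.centralizer ({x} : Set G)) (k + 1) : ℚ) * (p : ℚ) ^ (k + 1)
            ≤ g ^ (k + 1) := by
        intro x hx
        have hmem := (Finset.mem_filter.mp hx).2
        have h1 : (CT (Subgroup.centralizer ({x} : Set G)) (k + 1) : ℚ)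
            ≤ (Nat.card (Subgroup.centralizer ({x} : Set G)) : ℚ) ^ (k + 1) := by
          exact_mod_cast CT_le_pow _ (k + 1)
        have h2 : ((Nat.card (Subgroup.centralizer ({x} : Set G)) : ℚ) * p) ^ (k + 1)
            ≤ g ^ (k + 1) := by
          apply pow_le_pow_left₀ (by positivity)
          rw [hgdef]; exact_mod_cast hcb x hmem
        calc (CT (Subgroup.centralizer ({x} : Set G)) (k + 1) : ℚ) * (p : ℚ) ^ (k + 1)
            ≤ ((Nat.card (Subgroup.centralizer ({x} : Set G)) : ℚ)) ^ (k + 1) * (p:ℚ) ^ (k+1) := by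
              apply mul_le_mul_of_nonneg_right h1 (by positivity)
        _ = ((Nat.card (Subgroup.centralizer ({x} : Set G)) : ℚ) * p) ^ (k + 1) := by
              rw [mul_pow]
        _ ≤ g ^ (k + 1) := h2
      calc ∑ x ∈ univ.filter (fun x : G => x ∉ Subgroup.center G),
            (CT (Subgroup.centralizer ({x} : Set G)) (k + 1) : ℚ) * (p : ℚ) ^ (k + 1)
          ≤ ∑ _x ∈ univ.filter (fun x : G => x ∉ Subgroup.center G), g ^ (k + 1) :=
            Finset.sum_le_sum hterm
      _ = ((univ.filter (fun x : G => x ∉ Subgroup.center G)).card : ℚ) * g ^ (k + 1) := by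
            rw [Finset.sum_const, nsmul_eq_mul]
      _ ≤ (g - z) * g ^ (k + 1) := by
            apply mul_le_mul_of_nonneg_right _ (by positivity)
            rw [card_noncentral_filter]
            rw [hgdef, hzdef]
            have hle : Nat.card (Subgroup.center G) ≤ Nat.card G :=
              le_trans (Nat.le_mul_of_pos_right _ (pow_pos hp.pos 2)) hzp
            push_cast [hle]
            linarith
    -- assemble
    have e1 : (CT G (k + 2) : ℚ) * ((p:ℚ) ^ 3 * P ^ 2)
        = ((p:ℚ) ^ 2 * z) * ((CT G (k + 1) : ℚ) * ((p:ℚ) * P ^ 2))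
          + ((p:ℚ) ^ 2 * P) * (S * ((p:ℚ) * P)) := by
      rw [show ((CT G (k + 2) : ℚ)) = z * CT G (k + 1) + S from hsplit]
      ring
    have hPP : (p : ℚ) ^ (k + 1) = (p:ℚ) * P := by rw [hPdef]; ring
    have hXX : g ^ (k + 1) = g * X := by rw [hXdef]; ring
    have hIH : (CT G (k + 1) : ℚ) * ((p:ℚ) * P ^ 2) ≤ ((p:ℚ) * P + P - 1) * (g * X) := by
      have := IH
      rw [show (2 * k + 1 : ℕ) = 2 * k + 1 from rfl] at this
      calc (CT G (k + 1) : ℚ) * ((p:ℚ) * P ^ 2) = (CT G (k + 1) : ℚ) * (p:ℚ) ^ (2 * k + 1) := by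
            rw [hPdef]; ring
      _ ≤ ((p : ℚ) ^ (k + 1) + (p : ℚ) ^ k - 1) * g ^ (k + 1) := this
      _ = ((p:ℚ) * P + P - 1) * (g * X) := by rw [hPdef, hXdef]; ring
    have hSb' : S * ((p:ℚ) * P) ≤ (g - z) * (g * X) := by
      rw [← hPP, ← hXX]; exact hSb
    have b2 : ((p:ℚ) ^ 2 * P) * (S * ((p:ℚ) * P)) ≤ ((p:ℚ) ^ 2 * P) * ((g - z) * (g * X)) :=
      mul_le_mul_of_nonneg_left hSb' (by positivity)
    have b3 : ((p:ℚ) ^ 2 * z) * ((CT G (k + 1) : ℚ) * ((p:ℚ) * P ^ 2))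
        ≤ ((p:ℚ) ^ 2 * z) * (((p:ℚ) * P + P - 1) * (g * X)) :=
      mul_le_mul_of_nonneg_left hIH (by positivity)
    have b4 : (0:ℚ) ≤ (g - z * (p:ℚ) ^ 2) * (((p:ℚ) * P - 1) * (g * X)) := by
      apply mul_nonneg (by linarith)
      apply mul_nonneg (by nlinarith) (by positivity)
    calc (CT G (k + 1 + 1) : ℚ) * (p : ℚ) ^ (2 * (k + 1) + 1)
        = (CT G (k + 2) : ℚ) * ((p:ℚ) ^ 3 * P ^ 2) := by rw [hPdef]; ring
    _ ≤ ((p : ℚ) ^ (k + 1 + 1) + (p : ℚ) ^ (k + 1) - 1) * g ^ (k + 1 + 1) := by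
        rw [e1]
        have target : ((p : ℚ) ^ (k + 1 + 1) + (p : ℚ) ^ (k + 1) - 1) * g ^ (k + 1 + 1)
            = ((p:ℚ)^2 * P + (p:ℚ) * P - 1) * (g * (g * X)) := by rw [hPdef, hXdef]; ring
        rw [target]
        nlinarith [b2, b3, b4]

end Analytic
section Analytic2
variable (G : Type*) [Group G] [Fintype G]

set_option maxHeartbeats 1000000 in
private lemma CT_exact (p : ℕ) (hp : p.Prime)
    (hg : Nat.card G = Nat.card (Subgroup.center G) * p ^ 2)
    (hcc : ∀ x : G, x ∉ Subgroup.center G →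
      Nat.card (Subgroup.centralizer ({x} : Set G)) = Nat.card (Subgroup.center G) * p ∧
      ∀ a b : Subgroup.centralizer ({x} : Set G), a * b = b * a) (m : ℕ) :
    (CT G (m + 1) : ℚ) = ((p:ℚ) ^ (m + 1) + (p:ℚ) ^ m - 1)
      * (Nat.card (Subgroup.center G) : ℚ) ^ (m + 1) * p := by
  classical
  induction m with
  | zero => rw [CT_one, hg]; push_cast; ring
  | succ k IH =>
    have hterm : ∀ x ∈ univ.filter (fun x : G => x ∉ Subgroup.center G),
        (CT (Subgroup.centralizer ({x} : Set G)) (k + 1) : ℚ)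
          = ((Nat.card (Subgroup.center G) : ℚ) * p) ^ (k + 1) := by
      intro x hx
      obtain ⟨hcard, hab⟩ := hcc x (Finset.mem_filter.mp hx).2
      rw [CT_abelian _ _ hab, hcard]
      push_cast
      ring
    have hle : Nat.card (Subgroup.center G) ≤ Nat.card G := by
      rw [hg]; exact Nat.le_mul_of_pos_right _ (pow_pos hp.pos 2)
    rw [CT_split G (k + 1), Finset.sum_congr rfl hterm, Finset.sum_const, nsmul_eq_mul,
      card_noncentral_filter, IH, Nat.cast_sub hle, hg]
    push_cast
    ring

end Analytic2
section SBound
variable (G : Type*) [Group G] [Fintype G] [DecidablePred (fun x : G => x ∈ Subgroup.center G)]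

private lemma CT_S_bound (p : ℕ) (hp : p.Prime)
    (hcb : ∀ x : G, x ∉ Subgroup.center G →
      Nat.card (Subgroup.centralizer ({x} : Set G)) * p ≤ Nat.card G) (m : ℕ) :
    (∑ x ∈ univ.filter (fun x : G => x ∉ Subgroup.center G),
        (CT (Subgroup.centralizer ({x} : Set G)) m : ℚ)) * (p : ℚ) ^ m
      ≤ ((Nat.card G : ℚ) - (Nat.card (Subgroup.center G) : ℚ)) * (Nat.card G : ℚ) ^ m := by
  rw [Finset.sum_mul]
  have hterm : ∀ x ∈ univ.filter (fun x : G => x ∉ Subgroup.center G),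
      (CT (Subgroup.centralizer ({x} : Set G)) m : ℚ) * (p : ℚ) ^ m
        ≤ (Nat.card G : ℚ) ^ m := by
    intro x hx
    have hmem := (Finset.mem_filter.mp hx).2
    have h1 : (CT (Subgroup.centralizer ({x} : Set G)) m : ℚ)
        ≤ (Nat.card (Subgroup.centralizer ({x} : Set G)) : ℚ) ^ m := by
      exact_mod_cast CT_le_pow _ m
    calc (CT (Subgroup.centralizer ({x} : Set G)) m : ℚ) * (p : ℚ) ^ m
        ≤ (Nat.card (Subgroup.centralizer ({x} : Set G)) : ℚ) ^ m * (p : ℚ) ^ m :=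
          mul_le_mul_of_nonneg_right h1 (by positivity)
    _ = ((Nat.card (Subgroup.centralizer ({x} : Set G)) : ℚ) * p) ^ m := (mul_pow _ _ _).symm
    _ ≤ (Nat.card G : ℚ) ^ m := by
        apply pow_le_pow_left₀ (by positivity)
        exact_mod_cast hcb x hmem
  calc ∑ x ∈ univ.filter (fun x : G => x ∉ Subgroup.center G),
        (CT (Subgroup.centralizer ({x} : Set G)) m : ℚ) * (p : ℚ) ^ m
      ≤ ∑ _x ∈ univ.filter (fun x : G => x ∉ Subgroup.center G), (Nat.card G : ℚ) ^ m :=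
        Finset.sum_le_sum hterm
  _ = ((univ.filter (fun x : G => x ∉ Subgroup.center G)).card : ℚ) * (Nat.card G : ℚ) ^ m := by
      rw [Finset.sum_const, nsmul_eq_mul]
  _ ≤ ((Nat.card G : ℚ) - (Nat.card (Subgroup.center G) : ℚ)) * (Nat.card G : ℚ) ^ m := by
      apply mul_le_mul_of_nonneg_right _ (by positivity)
      rw [card_noncentral_filter]
      have hle : Nat.card (Subgroup.center G) ≤ Nat.card G :=
        Nat.card_le_card_of_injective _ Subtype.coe_injective
      push_cast [hle]
      linarith

end SBound


end Aux

open Subgroup Finset in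
theorem multCommDegree_eq_iff_quotient_center (G : Type*) [Group G] [Finite G]
    (hna : ¬ ∀ a b : G, a * b = b * a)
    (p : ℕ) (hp : p.Prime) (hdvd : p ∣ Nat.card G)
    (hmin : ∀ q : ℕ, q.Prime → q ∣ Nat.card G → p ≤ q)
    (n : ℕ) (hn : 1 ≤ n) :
    multCommDegree G n = ((p : ℚ) ^ (n + 1) + (p : ℚ) ^ n - 1) / (p : ℚ) ^ (2 * n + 1) ↔
      Nonempty ((G ⧸ Subgroup.center G) ≃*
        (Multiplicative (ZMod p) × Multiplicative (ZMod p))) := by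
  classical
  haveI : Fintype G := Fintype.ofFinite G
  have hg0 : 0 < Nat.card G := Nat.card_pos
  have hz0 : 0 < Nat.card (Subgroup.center G) := Nat.card_pos
  have hp0 : (0 : ℚ) < (p : ℚ) := by exact_mod_cast hp.pos
  have hgQ : (0 : ℚ) < (Nat.card G : ℚ) := by exact_mod_cast hg0
  have hzp : Nat.card (Subgroup.center G) * p ^ 2 ≤ Nat.card G :=
    center_card_mul_le hna hp hmin
  have hcb : ∀ x : G, x ∉ Subgroup.center G →
      Nat.card (Subgroup.centralizer ({x} : Set G)) * p ≤ Nat.card G :=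
    fun x hx => centralizer_card_mul_le hp hmin hx
  have hd : multCommDegree G n = (CT G (n + 1) : ℚ) / (Nat.card G : ℚ) ^ (n + 1) := rfl
  constructor
  · intro heq
    obtain ⟨k, rfl⟩ : ∃ k, n = k + 1 := ⟨n - 1, (Nat.succ_pred_eq_of_pos hn).symm⟩
    rw [hd, div_eq_div_iff (by positivity) (by positivity)] at heq
    -- heq : CT G (k+2) * p^(2*(k+1)+1) = (p^(k+2)+p^(k+1)-1) * g^(k+2)
    set g : ℚ := (Nat.card G : ℚ) with hgdef
    set z : ℚ := (Nat.card (Subgroup.center G) : ℚ) with hzdef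
    set P : ℚ := (p : ℚ) ^ k with hPdef
    set X : ℚ := g ^ k with hXdef
    have hp2 : (2 : ℚ) ≤ (p : ℚ) := by exact_mod_cast hp.two_le
    have hP1 : (1 : ℚ) ≤ P := one_le_pow₀ (by linarith)
    have hX0 : (0 : ℚ) < X := by positivity
    have hzpQ : z * (p : ℚ) ^ 2 ≤ g := by rw [hzdef, hgdef]; exact_mod_cast hzp
    have hsplit := CT_split G (k + 1)
    set S : ℚ := ∑ x ∈ univ.filter (fun x : G => x ∉ Subgroup.center G),
        (CT (Subgroup.centralizer ({x} : Set G)) (k + 1) : ℚ) with hSdef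
    have hSb : S * ((p:ℚ) * P) ≤ (g - z) * (g * X) := by
      have := CT_S_bound G p hp hcb (k + 1)
      calc S * ((p:ℚ) * P) = S * (p : ℚ) ^ (k + 1) := by rw [hPdef]; ring
      _ ≤ (g - z) * g ^ (k + 1) := this
      _ = (g - z) * (g * X) := by rw [hXdef]; ring
    have hIH : (CT G (k + 1) : ℚ) * ((p:ℚ) * P ^ 2) ≤ ((p:ℚ) * P + P - 1) * (g * X) := by
      have h := CT_bound G p hp hcb hzp k
      calc (CT G (k + 1) : ℚ) * ((p:ℚ) * P ^ 2) = (CT G (k + 1) : ℚ) * (p:ℚ) ^ (2 * k + 1) := by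
            rw [hPdef]; ring
      _ ≤ ((p : ℚ) ^ (k + 1) + (p : ℚ) ^ k - 1) * g ^ (k + 1) := h
      _ = ((p:ℚ) * P + P - 1) * (g * X) := by rw [hPdef, hXdef]; ring
    have e1 : (CT G (k + 2) : ℚ) * ((p:ℚ) ^ 3 * P ^ 2)
        = ((p:ℚ) ^ 2 * z) * ((CT G (k + 1) : ℚ) * ((p:ℚ) * P ^ 2))
          + ((p:ℚ) ^ 2 * P) * (S * ((p:ℚ) * P)) := by
      rw [show ((CT G (k + 2) : ℚ)) = z * CT G (k + 1) + S from hsplit]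
      ring
    have hCT' : (CT G (k + 2) : ℚ) * ((p:ℚ) ^ 3 * P ^ 2)
        = ((p:ℚ) ^ 2 * P + (p:ℚ) * P - 1) * (g * (g * X)) := by
      calc (CT G (k + 2) : ℚ) * ((p:ℚ) ^ 3 * P ^ 2)
          = (CT G (k + 1 + 1) : ℚ) * (p : ℚ) ^ (2 * (k + 1) + 1) := by rw [hPdef]; ring
      _ = ((p:ℚ) ^ (k + 1 + 1) + (p:ℚ) ^ (k + 1) - 1) * g ^ (k + 1 + 1) := heq
      _ = ((p:ℚ) ^ 2 * P + (p:ℚ) * P - 1) * (g * (g * X)) := by rw [hPdef, hXdef]; ring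
    have b2 : ((p:ℚ) ^ 2 * P) * (S * ((p:ℚ) * P)) ≤ ((p:ℚ) ^ 2 * P) * ((g - z) * (g * X)) :=
      mul_le_mul_of_nonneg_left hSb (by positivity)
    have b3 : ((p:ℚ) ^ 2 * z) * ((CT G (k + 1) : ℚ) * ((p:ℚ) * P ^ 2))
        ≤ ((p:ℚ) ^ 2 * z) * (((p:ℚ) * P + P - 1) * (g * X)) := by
      apply mul_le_mul_of_nonneg_left hIH
      rw [hzdef]; positivity
    have hglez : g ≤ z * (p : ℚ) ^ 2 := by
      by_contra hgt
      push_neg at hgt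
      have hpos : (0:ℚ) < (g - z * (p:ℚ) ^ 2) * (((p:ℚ) * P - 1) * (g * X)) := by
        apply mul_pos (by linarith)
        apply mul_pos (by nlinarith) (by positivity)
      linarith [e1, hCT', b2, b3, hpos]
    have hgz : (Nat.card G : ℚ) = (Nat.card (Subgroup.center G) : ℚ) * (p:ℚ) ^ 2 :=
      le_antisymm hglez hzpQ
    have hgzN : Nat.card G = Nat.card (Subgroup.center G) * p ^ 2 := by exact_mod_cast hgz
    have hidx : (Subgroup.center G).index = p ^ 2 := by
      have h1 : Nat.card (Subgroup.center G) * (Subgroup.center G).index = Nat.card G :=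
        Subgroup.card_mul_index _
      rw [hgzN] at h1
      exact Nat.eq_of_mul_eq_mul_left hz0 h1
    have hcardQ : Nat.card (G ⧸ Subgroup.center G) = p ^ 2 := by
      rw [← Subgroup.index_eq_card, hidx]
    have hnc : ¬ IsCyclic (G ⧸ Subgroup.center G) := by
      intro hcyc
      exact hna (commutative_of_cyclic_center_quotient (QuotientGroup.mk' (Subgroup.center G))
        (by rw [QuotientGroup.ker_mk']))
    exact iso_of_card_sq hp _ hcardQ hnc
  · rintro ⟨e⟩
    have hcardQ : Nat.card (G ⧸ Subgroup.center G) = p ^ 2 := by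
      rw [Nat.card_congr e.toEquiv, Nat.card_prod, Nat.card_congr Multiplicative.toAdd,
        Nat.card_zmod, pow_two]
    have hidx : (Subgroup.center G).index = p ^ 2 := by
      rw [Subgroup.index_eq_card, hcardQ]
    have hg : Nat.card G = Nat.card (Subgroup.center G) * p ^ 2 := by
      rw [← Subgroup.card_mul_index (Subgroup.center G), hidx]
    have hcc : ∀ x : G, x ∉ Subgroup.center G →
        Nat.card (Subgroup.centralizer ({x} : Set G)) = Nat.card (Subgroup.center G) * p ∧
        ∀ a b : Subgroup.centralizer ({x} : Set G), a * b = b * a := by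
      intro x hx
      obtain ⟨h1, h2⟩ := centralizer_of_index_sq hp hidx hx
      refine ⟨?_, h2⟩
      have : Nat.card (Subgroup.centralizer ({x} : Set G)) * p
          = (Nat.card (Subgroup.center G) * p) * p := by
        rw [h1, hg]; ring
      exact Nat.eq_of_mul_eq_mul_right hp.pos this
    have hexact := CT_exact G p hp hg hcc n
    rw [hd, hexact, hg, div_eq_div_iff
      (ne_of_gt (pow_pos (by exact_mod_cast Nat.mul_pos hz0 (pow_pos hp.pos 2)) _))
      (ne_of_gt (pow_pos hp0 _))]
    push_cast
    ring
end
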